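/- Every function F : (ℤ/3ℤ)² → ℤ/3ℤ can be represented as a sum F(x₁,x₂) = Σᵢ₌₁^L fᵢ(gᵢ₁(x₁) + gᵢ₂(x₂)) with L ≤ 9, where all fᵢ, gᵢ₁, gᵢ₂ : ℤ/3ℤ → ℤ/3ℤ are unary functions and sums are taken in ℤ/3ℤ. -/

import Mathlib

/-- Every binary function on ℤ/3ℤ is a sum of at most 9 terms fᵢ(gᵢ₁(x₁)+gᵢ₂(x₂)). -/
theorem stmt_4 (F : ZMod 3 × ZMod 3 → ZMod 3) :
    ∃ L : ℕ, L ≤ 9 ∧ ∃ f g₁ g₂ : Fin L → (ZMod 3 → ZMod 3),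
      ∀ x₁ x₂ : ZMod 3, F (x₁, x₂) = ∑ i : Fin L, f i (g₁ i x₁ + g₂ i x₂) := by
  refine ⟨9, le_refl _, ?_⟩
  set A : Fin 9 → ZMod 3 := ![0,0,0,1,1,1,2,2,2] with hA
  set B : Fin 9 → ZMod 3 := ![0,1,2,0,1,2,0,1,2] with hB
  refine ⟨fun i t => if t = 2 then F (A i, B i) else 0,
    fun i x => if x = A i then 1 else 0,
    fun i x => if x = B i then 1 else 0, ?_⟩
  intro x₁ x₂
  have h3 : ∀ x : ZMod 3, x = 0 ∨ x = 1 ∨ x = 2 := by decide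
  rcases h3 x₁ with rfl | rfl | rfl <;> rcases h3 x₂ with rfl | rfl | rfl <;>
    simp [hA, hB, Fin.sum_univ_succ, Fin.isValue, show ((2:ZMod 3)) ≠ 0 by decide,
      show ((2:ZMod 3)) ≠ 1 by decide, show ((1:ZMod 3)) ≠ 2 by decide,
      show ((1:ZMod 3)) ≠ 0 by decide, show ((0:ZMod 3)) ≠ 1 by decide,
      show ((0:ZMod 3)) ≠ 2 by decide] <;> norm_num
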